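/- Let p = g ∘ f with f, g as above. Then p(z) = f(z) whenever |f(z)| ≤ 1. In particular, since f(z) = z/2 on the diamonds W_k = 2^{-k}W₀ (which all lie in the closed unit disc), p maps W̄_k onto W̄_{k+1} for every k ≥ 0, and consequently pⁿ(z) → 0 uniformly on each W̄_k as n → ∞. -/

import Mathlib

open Set Complex Filter
open Topology

/-- The slice function `h_y`. -/
noncomputable def hy (y x : ℝ) : ℝ :=
  if |x| + |y - 3/4| < 1/4 then 1
  else if y ≤ |x| then 4
  else if y ≤ 3/4 then 6 * |x| - 6 * y + 4
  else (3 * |x| + 5 * y - 4) / (2 * y - 1)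

/-- The map `h(x + iy) = h_y(x)·x + iy`. -/
noncomputable def hmap (z : ℂ) : ℂ := ⟨hy z.im z.re * z.re, z.im⟩

/-- For `y > 0`, the unique integer `m` with `2^{-(m+1)} < y ≤ 2^{-m}`. -/
noncomputable def mval (y : ℝ) : ℤ := ⌊Real.logb 2 y⁻¹⌋

/-- The map `f`: equal to `2^{-(m+1)} h(2^m z)` when `Im z ∈ (2^{-(m+1)}, 2^{-m}]`,
and to `2x + iy/2` when `Im z ≤ 0`. -/
noncomputable def f (z : ℂ) : ℂ :=
  if z.im ≤ 0 then ⟨2 * z.re, z.im / 2⟩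
  else (2 : ℂ) ^ (-(mval z.im + 1)) * hmap ((2 : ℂ) ^ (mval z.im) * z)

/-- The open diamond `W₀` with vertices `i`, `i/2`, `(3i+1)/4`, `(3i-1)/4`. -/
def W0 : Set ℂ := {z : ℂ | |z.re| + |z.im - 3/4| < 1/4}

/-- The scaled diamonds `W_k = 2^{-k} W₀`. -/
def W (k : ℕ) : Set ℂ := (fun z : ℂ => (2 : ℂ) ^ (-(k : ℤ)) * z) '' W0


lemma two_zpow_ofReal (n : ℤ) : (2:ℂ)^n = (((2:ℝ)^n : ℝ) : ℂ) := by
  push_cast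
  ring

lemma closure_W0 : closure W0 = {z : ℂ | |z.re| + |z.im - 3/4| ≤ 1/4} := by
  have hcont : Continuous fun z : ℂ => |z.re| + |z.im - 3/4| :=
    (Complex.continuous_re.abs).add ((Complex.continuous_im.sub continuous_const).abs)
  apply Subset.antisymm
  · refine closure_minimal (fun z hz => ?_) (isClosed_le hcont continuous_const)
    have hz' : |z.re| + |z.im - 3/4| < 1/4 := hz
    exact le_of_lt hz'
  · intro z hz
    have ht : Tendsto (fun n : ℕ => ((n:ℝ)/(n+1))) atTop (𝓝 1) := by
      have := tendsto_natCast_div_add_atTop (1:ℝ)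
      simpa using this
    have ht' : Tendsto (fun n : ℕ => (((n:ℝ)/((n:ℝ)+1) : ℝ) : ℂ)) atTop (𝓝 1) := by
      have := (Complex.continuous_ofReal.tendsto 1).comp ht
      simpa [Function.comp_def] using this
    have key : Tendsto (fun n : ℕ => (⟨0, 3/4⟩ : ℂ) + (((n:ℝ)/((n:ℝ)+1) : ℝ) : ℂ) * (z - ⟨0, 3/4⟩))
        atTop (𝓝 z) := by
      have := (tendsto_const_nhds (x := (⟨0, 3/4⟩ : ℂ)) (f := atTop (α := ℕ))).add (ht'.mul (tendsto_const_nhds (x := z - ⟨0, 3/4⟩)))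
      simpa using this
    refine mem_closure_of_tendsto key (Eventually.of_forall fun n => ?_)
    have hn0 : (0:ℝ) ≤ (n:ℝ)/((n:ℝ)+1) := by positivity
    have hn1 : (n:ℝ)/((n:ℝ)+1) < 1 := by
      rw [div_lt_one (by positivity)]; linarith
    set t : ℝ := (n:ℝ)/((n:ℝ)+1) with htt
    simp only [W0, Set.mem_setOf_eq]
    have hre : ((⟨0, 3/4⟩ : ℂ) + (t : ℂ) * (z - ⟨0, 3/4⟩)).re = t * z.re := by
      simp [Complex.add_re, Complex.mul_re, Complex.sub_re]
    have him : ((⟨0, 3/4⟩ : ℂ) + (t : ℂ) * (z - ⟨0, 3/4⟩)).im = 3/4 + t * (z.im - 3/4) := by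
      simp [Complex.add_im, Complex.mul_im, Complex.sub_im]
    rw [hre, him]
    have h1 : |t * z.re| = t * |z.re| := by rw [abs_mul, _root_.abs_of_nonneg hn0]
    have h2 : |3/4 + t * (z.im - 3/4) - 3/4| = t * |z.im - 3/4| := by
      rw [show (3/4 + t * (z.im - 3/4) - 3/4 : ℝ) = t * (z.im - 3/4) by ring,
        abs_mul, _root_.abs_of_nonneg hn0]
    rw [h1, h2, ← mul_add]
    calc t * (|z.re| + |z.im - 3/4|) ≤ t * (1/4) := by
          apply mul_le_mul_of_nonneg_left hz hn0
      _ < 1/4 := by linarith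

lemma hmap_re_zero {z : ℂ} (h : z.re = 0) : hmap z = z := by
  apply Complex.ext
  · simp [hmap, h]
  · rfl

lemma hy_one {x y : ℝ} (h : |x| + |y - 3/4| ≤ 1/4) (h0 : x ≠ 0) : hy y x = 1 := by
  have hx : 0 < |x| := abs_pos.2 h0
  have h3 : |y - 3/4| < 1/4 := by linarith
  have h4 := abs_lt.1 h3
  have hy1 : 1/2 < y := by linarith [h4.1]
  have hy2 : y < 1 := by linarith [h4.2]
  unfold hy
  by_cases hc : |x| + |y - 3/4| < 1/4
  · rw [if_pos hc]
  · rw [if_neg hc]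
    have heq : |x| + |y - 3/4| = 1/4 := le_antisymm h (not_lt.1 hc)
    have hxle : |x| ≤ 1/4 := by linarith [abs_nonneg (y - 3/4)]
    rw [if_neg (by push_neg; linarith)]
    by_cases hy3 : y ≤ 3/4
    · rw [if_pos hy3]
      have h5 : |y - 3/4| = 3/4 - y := by
        rw [abs_of_nonpos (by linarith)]; ring
      have h6 : |x| = y - 1/2 := by linarith
      rw [h6]; ring
    · rw [if_neg hy3]
      push_neg at hy3
      have h5 : |y - 3/4| = y - 3/4 := abs_of_nonneg (by linarith)
      have h6 : |x| = 1 - y := by linarith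
      have h7 : 2*y - 1 ≠ 0 := by intro hc'; linarith [hy1]
      rw [h6, div_eq_one_iff_eq h7]; ring

lemma hmap_diamond {z : ℂ} (h : |z.re| + |z.im - 3/4| ≤ 1/4) : hmap z = z := by
  rcases eq_or_ne z.re 0 with h0 | h0
  · exact hmap_re_zero h0
  · apply Complex.ext
    · show hy z.im z.re * z.re = z.re
      rw [hy_one h h0, one_mul]
    · rfl

lemma f_imaginary {z : ℂ} (h0 : z.re = 0) (h1 : 0 < z.im) : f z = z / 2 := by
  unfold f
  rw [if_neg (not_le.2 h1)]
  have hre : ((2:ℂ) ^ (mval z.im) * z).re = 0 := by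
    have h2 : ((2:ℂ)^(mval z.im)).im = 0 := by rw [two_zpow_ofReal]; exact Complex.ofReal_im _
    rw [Complex.mul_re, h0, h2]; ring
  rw [hmap_re_zero hre, ← mul_assoc, ← zpow_add₀ (two_ne_zero : (2:ℂ) ≠ 0),
    show -(mval z.im + 1) + mval z.im = -1 by ring, zpow_neg_one]
  ring

lemma closure_W (k : ℕ) :
    closure (W k)
      = (fun z : ℂ => (2:ℂ) ^ (-(k:ℤ)) * z) '' {z : ℂ | |z.re| + |z.im - 3/4| ≤ 1/4} := by
  have hne : ((2:ℂ) ^ (-(k:ℤ))) ≠ 0 := zpow_ne_zero _ two_ne_zero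
  have hcoe := Homeomorph.coe_mulLeft₀ ((2:ℂ) ^ (-(k:ℤ))) hne
  calc closure (W k) = closure ((Homeomorph.mulLeft₀ _ hne) '' W0) := by
        rw [W, hcoe]
    _ = (Homeomorph.mulLeft₀ _ hne) '' closure W0 := (Homeomorph.image_closure _ _).symm
    _ = _ := by rw [closure_W0, hcoe]

lemma re_im_scale (k : ℕ) (w : ℂ) :
    ((2:ℂ)^(-(k:ℤ)) * w).re = (2:ℝ)^(-(k:ℤ)) * w.re ∧
    ((2:ℂ)^(-(k:ℤ)) * w).im = (2:ℝ)^(-(k:ℤ)) * w.im := by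
  rw [two_zpow_ofReal]
  constructor
  · rw [Complex.mul_re, Complex.ofReal_re, Complex.ofReal_im]; ring
  · rw [Complex.mul_im, Complex.ofReal_re, Complex.ofReal_im]; ring

lemma f_half {k : ℕ} {z : ℂ} (hz : z ∈ closure (W k)) : f z = z / 2 := by
  rw [closure_W] at hz
  obtain ⟨w, hw, rfl⟩ := hz
  simp only [Set.mem_setOf_eq] at hw
  obtain ⟨hre, him⟩ := re_im_scale k w
  have hrpos : (0:ℝ) < (2:ℝ)^(-(k:ℤ)) := by positivity
  have hwim := abs_le.1 (show |w.im - 3/4| ≤ 1/4 by linarith [abs_nonneg w.re])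
  have hwim1 : 1/2 ≤ w.im := by linarith [hwim.1]
  have hwim2 : w.im ≤ 1 := by linarith [hwim.2]
  have himpos : 0 < ((2:ℂ)^(-(k:ℤ)) * w).im := by
    rw [him]; exact mul_pos hrpos (by linarith)
  rcases eq_or_ne w.re 0 with h0 | h0
  · exact f_imaginary (by rw [hre, h0, mul_zero]) himpos
  · have hx : 0 < |w.re| := abs_pos.2 h0
    have h4 := abs_lt.1 (show |w.im - 3/4| < 1/4 by linarith)
    have hwim1' : 1/2 < w.im := by linarith [h4.1]
    have hwim2' : w.im < 1 := by linarith [h4.2]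
    have hmv : mval ((2:ℂ)^(-(k:ℤ)) * w).im = (k:ℤ) := by
      rw [him]
      unfold mval
      have hinv : ((2:ℝ)^(-(k:ℤ)) * w.im)⁻¹ = (2:ℝ)^((k:ℤ)) * (w.im)⁻¹ := by
        rw [mul_inv, ← zpow_neg, neg_neg]
      rw [hinv, Real.logb_mul (by positivity) (by positivity)]
      have hlogk : Real.logb 2 ((2:ℝ)^((k:ℤ))) = (k:ℝ) := by
        rw [zpow_natCast, Real.logb_pow, Real.logb_self_eq_one (by norm_num)]
        ring
      have hs0 : 0 ≤ Real.logb 2 (w.im)⁻¹ := by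
        apply Real.logb_nonneg one_lt_two
        rw [one_le_inv_iff₀]
        exact ⟨by linarith, hwim2⟩
      have hs1 : Real.logb 2 (w.im)⁻¹ < 1 := by
        rw [Real.logb_lt_iff_lt_rpow one_lt_two (by positivity), Real.rpow_one,
          inv_lt_comm₀ (by linarith) (by norm_num)]
        linarith
      rw [hlogk, ← Int.cast_natCast, Int.floor_intCast_add,
        Int.floor_eq_zero_iff.2 ⟨hs0, hs1⟩, add_zero]
    unfold f
    rw [if_neg (not_le.2 himpos), hmv]
    have harg : (2:ℂ)^((k:ℤ)) * ((2:ℂ)^(-(k:ℤ)) * w) = w := by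
      rw [← mul_assoc, ← zpow_add₀ (two_ne_zero : (2:ℂ) ≠ 0)]
      simp
    rw [harg, hmap_diamond hw,
      show -((k:ℤ)+1) = -(k:ℤ) + (-1) by ring,
      zpow_add₀ (two_ne_zero : (2:ℂ) ≠ 0), zpow_neg_one]
    ring

lemma abs_le_on {k : ℕ} {z : ℂ} (hz : z ∈ closure (W k)) : ‖z‖ ≤ 5/4 := by
  rw [closure_W] at hz
  obtain ⟨w, hw, rfl⟩ := hz
  simp only [Set.mem_setOf_eq] at hw
  have hwim := abs_le.1 (show |w.im - 3/4| ≤ 1/4 by linarith [abs_nonneg w.re])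
  have h1 : ‖w‖ ≤ 5/4 := by
    refine (Complex.norm_le_abs_re_add_abs_im w).trans ?_
    have h2 : |w.im| ≤ 1 := abs_le.2 ⟨by linarith [hwim.1], by linarith [hwim.2]⟩
    have h3 : |w.re| ≤ 1/4 := by linarith [abs_nonneg (w.im - 3/4)]
    linarith
  have h2 : ‖(2:ℂ)^(-(k:ℤ))‖ ≤ 1 := by
    rw [norm_zpow, Complex.norm_two, zpow_neg]
    rw [inv_le_one_iff₀]
    right
    rw [zpow_natCast]
    exact one_le_pow₀ one_le_two
  calc ‖(2:ℂ)^(-(k:ℤ)) * w‖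
      = ‖(2:ℂ)^(-(k:ℤ))‖ * ‖w‖ := norm_mul _ _
    _ ≤ 1 * (5/4) := mul_le_mul h2 h1 (by positivity) (by norm_num)
    _ = 5/4 := one_mul _

lemma half_mem {k : ℕ} {z : ℂ} (hz : z ∈ closure (W k)) : z / 2 ∈ closure (W (k+1)) := by
  rw [closure_W] at hz ⊢
  obtain ⟨w, hw, rfl⟩ := hz
  refine ⟨w, hw, ?_⟩
  rw [show (-((k:ℕ)+1:ℕ):ℤ) = -(k:ℤ) + (-1) by push_cast; ring,
    zpow_add₀ (two_ne_zero : (2:ℂ) ≠ 0), zpow_neg_one]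
  ring

lemma image_half (k : ℕ) :
    (fun z : ℂ => z / 2) '' closure (W k) = closure (W (k + 1)) := by
  rw [closure_W, closure_W, Set.image_image]
  apply Set.image_congr'
  intro w
  rw [show (-((k:ℕ)+1:ℕ):ℤ) = -(k:ℤ) + (-1) by push_cast; ring,
    zpow_add₀ (two_ne_zero : (2:ℂ) ≠ 0), zpow_neg_one]
  ring

/-- The map `g`. -/
noncomputable def g (δ : ℝ) (d : ℕ) (z : ℂ) : ℂ :=
  if ‖z‖ ≤ 1 then z
  else if ‖z‖ ≤ 2 then z + δ * (‖z‖ - 1) * z ^ d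
  else z + δ * z ^ d

/-- The polynomial-type quasiregular map `p = g ∘ f`. -/
noncomputable def p (δ : ℝ) (d : ℕ) : ℂ → ℂ := g δ d ∘ f


lemma p_eq_of_abs_le (δ : ℝ) (d : ℕ) {z : ℂ} (h : ‖f z‖ ≤ 1) :
    p δ d z = f z := by
  simp only [p, Function.comp_apply, g, if_pos h]

lemma p_half (δ : ℝ) (d : ℕ) {k : ℕ} {z : ℂ} (hz : z ∈ closure (W k)) :
    p δ d z = z / 2 := by
  have hf := f_half hz
  have habs : ‖f z‖ ≤ 1 := by
    rw [hf, norm_div, Complex.norm_two]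
    have := abs_le_on hz
    linarith
  rw [p_eq_of_abs_le δ d habs, hf]

theorem stmt12 (δ : ℝ) (hδ : 0 < δ) (d : ℕ) (hd : 2 ≤ d) :
    (∀ z : ℂ, ‖f z‖ ≤ 1 → p δ d z = f z) ∧
    (∀ k : ℕ, p δ d '' closure (W k) = closure (W (k + 1))) ∧
    (∀ k : ℕ, TendstoUniformlyOn (fun (n : ℕ) (z : ℂ) => (p δ d)^[n] z) 0
        Filter.atTop (closure (W k))) := by
  refine ⟨fun z hzf => p_eq_of_abs_le δ d hzf, fun k => ?_, fun k => ?_⟩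
  · rw [← image_half k]
    exact Set.image_congr (fun z hz => p_half δ d hz)
  · have key : ∀ n : ℕ, ∀ z ∈ closure (W k),
        (p δ d)^[n] z ∈ closure (W (k+n)) ∧ (p δ d)^[n] z = (1/2 : ℂ)^n * z := by
      intro n
      induction n with
      | zero => intro z hz; simpa using hz
      | succ n ih =>
        intro z hz
        obtain ⟨hmem, heq⟩ := ih z hz
        rw [Function.iterate_succ_apply', p_half δ d hmem]
        refine ⟨?_, by rw [heq]; ring⟩
        have := half_mem hmem
        rwa [show k + n + 1 = k + (n + 1) by ring] at this
    rw [Metric.tendstoUniformlyOn_iff]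
    intro ε hε
    have htend : Tendsto (fun n : ℕ => (5/4 : ℝ) * (1/2)^n) atTop (𝓝 0) := by
      have := (tendsto_pow_atTop_nhds_zero_of_lt_one (by norm_num : (0:ℝ) ≤ 1/2)
        (by norm_num : (1/2:ℝ) < 1)).const_mul (5/4 : ℝ)
      simpa using this
    filter_upwards [htend.eventually (gt_mem_nhds hε)] with n hn z hz
    rw [Pi.zero_apply, (key n z hz).2, dist_zero_left]
    have hb : ‖(1/2 : ℂ)^n * z‖ ≤ 5/4 * (1/2)^n := by
      rw [norm_mul, norm_pow]
      have h1 : ‖(1/2 : ℂ)‖ = 1/2 := by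
        rw [show (1/2 : ℂ) = ((1/2 : ℝ) : ℂ) by norm_num, Complex.norm_real]
        norm_num
      rw [h1]
      have h2 := abs_le_on hz
      have h3 : (0:ℝ) ≤ (1/2:ℝ)^n := by positivity
      nlinarith
    exact lt_of_le_of_lt hb hn
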